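/- If A is an approximant with A ⊑ M for a λ-term M, then the normalized Taylor expansion 𝒯ⁿᶠ(A) is contained in NF(𝒯(M)). -/

import Mathlib

/-- λ-terms possibly containing the constant ⊥ (Λ⊥). Pure λ-terms are those
satisfying `NoBot`. Variables are natural numbers. -/
inductive Tm : Type
  | var : ℕ → Tm
  | lam : ℕ → Tm → Tm
  | app : Tm → Tm → Tm
  | bot : Tm
deriving DecidableEq

namespace Tm

/-- Values of Λ⊥: ⊥, variables and abstractions. -/
def IsVal : Tm → Prop
  | var _ => True
  | lam _ _ => True
  | bot => True
  | app _ _ => False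

/-- A term is a pure λ-term when it contains no occurrence of ⊥. -/
def NoBot : Tm → Prop
  | var _ => True
  | lam _ M => NoBot M
  | app M N => NoBot M ∧ NoBot N
  | bot => False

/-- `FV x M` : the variable `x` occurs free in `M`. -/
inductive FV : ℕ → Tm → Prop
  | var : ∀ x, FV x (var x)
  | lam : ∀ {x y M}, x ≠ y → FV x M → FV x (lam y M)
  | appL : ∀ {x M N}, FV x M → FV x (app M N)
  | appR : ∀ {x M N}, FV x N → FV x (app M N)

/-- Capture-avoiding substitution `M[x := N]` (bound variables are assumed to
be suitably renamed, so we substitute naively under binders `≠ x`). -/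
def subst : Tm → ℕ → Tm → Tm
  | var y, x, N => if y = x then N else var y
  | lam y P, x, N => if y = x then lam y P else lam y (subst P x N)
  | app P Q, x, N => app (subst P x N) (subst Q x N)
  | bot, _, _ => bot

/-- The v-reduction: contextual closure of the rules β_v, σ₁ and σ₃. -/
inductive Step : Tm → Tm → Prop
  | beta : ∀ {x M V}, IsVal V → Step (app (lam x M) V) (subst M x V)
  | sigma1 : ∀ {x M N P}, ¬ FV x P →
      Step (app (app (lam x M) N) P) (app (lam x (app M P)) N)
  | sigma3 : ∀ {x V M N}, IsVal V → ¬ FV x V →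
      Step (app V (app (lam x M) N)) (app (lam x (app V M)) N)
  | appL : ∀ {M M' N}, Step M M' → Step (app M N) (app M' N)
  | appR : ∀ {M N N'}, Step N N' → Step (app M N) (app M N')
  | lam : ∀ {x M M'}, Step M M' → Step (lam x M) (lam x M')

/-- The σ-reduction: contextual closure of the rules σ₁ and σ₃ only. -/
inductive SStep : Tm → Tm → Prop
  | sigma1 : ∀ {x M N P}, ¬ FV x P →
      SStep (app (app (lam x M) N) P) (app (lam x (app M P)) N)
  | sigma3 : ∀ {x V M N}, IsVal V → ¬ FV x V →
      SStep (app V (app (lam x M) N)) (app (lam x (app V M)) N)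
  | appL : ∀ {M M' N}, SStep M M' → SStep (app M N) (app M' N)
  | appR : ∀ {M N N'}, SStep N N' → SStep (app M N) (app M N')
  | lam : ∀ {x M M'}, SStep M M' → SStep (lam x M) (lam x M')

/-- A term is in v-normal form when no v-reduction step applies. -/
def VNormal (M : Tm) : Prop := ∀ N, ¬ Step M N

mutual
  /-- Grammar of v-normal forms: general normal forms `G ::= H | R`. -/
  inductive IsG : Tm → Prop
    | ofH : ∀ {t}, IsH t → IsG t
    | ofR : ∀ {t}, IsR t → IsG t
  /-- head normal forms `H ::= x | λx.G | x H G₁ ⋯ G_k`. -/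
  inductive IsH : Tm → Prop
    | var : ∀ x, IsH (var x)
    | lam : ∀ {x t}, IsG t → IsH (lam x t)
    | spine : ∀ {t}, IsHSpine t → IsH t
  /-- terms of the shape `x H G₁ ⋯ G_k` (k ≥ 0). -/
  inductive IsHSpine : Tm → Prop
    | head : ∀ {x h}, IsH h → IsHSpine (app (var x) h)
    | app : ∀ {t g}, IsHSpine t → IsG g → IsHSpine (app t g)
  /-- redex-like normal forms `R ::= (λx.G)(y H G₁ ⋯ G_k)`. -/
  inductive IsR : Tm → Prop
    | mk : ∀ {x t s}, IsG t → IsHSpine s → IsR (app (lam x t) s)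
end

mutual
  /-- The set 𝒜 of approximants: `A ::= B | C`. -/
  inductive IsA : Tm → Prop
    | ofB : ∀ {t}, IsB t → IsA t
    | ofC : ∀ {t}, IsC t → IsA t
  /-- `B ::= x | λx.A | ⊥ | x B A₁ ⋯ A_k`. -/
  inductive IsB : Tm → Prop
    | var : ∀ x, IsB (var x)
    | lam : ∀ {x t}, IsA t → IsB (lam x t)
    | bot : IsB bot
    | spine : ∀ {t}, IsBSpine t → IsB t
  /-- terms of the shape `x B A₁ ⋯ A_k` (k ≥ 0). -/
  inductive IsBSpine : Tm → Prop
    | head : ∀ {x b}, IsB b → IsBSpine (app (var x) b)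
    | app : ∀ {t a}, IsBSpine t → IsA a → IsBSpine (app t a)
  /-- `C ::= (λx.A)(y B A₁ ⋯ A_k)`. -/
  inductive IsC : Tm → Prop
    | mk : ∀ {x t s}, IsA t → IsBSpine s → IsC (app (lam x t) s)
end

/-- The order ⊑ on Λ⊥: context-closed preorder generated by ⊥ ⊑ x, ⊥ ⊑ λx.M. -/
inductive LE : Tm → Tm → Prop
  | refl : ∀ t, LE t t
  | botVar : ∀ x, LE bot (var x)
  | botLam : ∀ x t, LE bot (lam x t)
  | lam : ∀ {x s t}, LE s t → LE (lam x s) (lam x t)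
  | app : ∀ {s₁ s₂ t₁ t₂}, LE s₁ t₁ → LE s₂ t₂ → LE (app s₁ s₂) (app t₁ t₂)

/-- The set of approximants of a term:
`𝒜(M) = { A ∈ 𝒜 | ∃ N, M →*_v N and A ⊑ N }`. -/
def ApproxOf (M : Tm) : Set Tm :=
  {A | IsA A ∧ ∃ N, Relation.ReflTransGen Step M N ∧ LE A N}

end Tm

/-- Single-hole (⊥-)contexts. -/
inductive Ctx : Type
  | hole : Ctx
  | appL : Ctx → Tm → Ctx
  | appR : Tm → Ctx → Ctx
  | lam : ℕ → Ctx → Ctx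

/-- Filling the hole of a context with a term (possibly capturing variables). -/
def Ctx.fill : Ctx → Tm → Tm
  | .hole, M => M
  | .appL C N, M => .app (C.fill M) N
  | .appR N C, M => .app N (C.fill M)
  | .lam x C, M => .lam x (C.fill M)

/-- Resource terms of the CbV resource calculus: resource values are
variables `var x` and abstractions `lam x t`; simple terms are applications
`app s t` and bags `bag [v₁,…,v_k]` (finite multisets of values, represented
as lists considered up to permutation by the rules below). -/
inductive RTm : Type
  | var : ℕ → RTm
  | lam : ℕ → RTm → RTm
  | app : RTm → RTm → RTm
  | bag : List RTm → RTm

namespace RTm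

/-- Resource values. -/
def IsRVal : RTm → Prop
  | var _ => True
  | lam _ _ => True
  | _ => False

/-- Simple terms (applications and bags). -/
def IsSimple : RTm → Prop
  | app _ _ => True
  | bag _ => True
  | _ => False

/-- Free-variable occurrence predicate for resource terms. -/
inductive RFV : ℕ → RTm → Prop
  | var : ∀ x, RFV x (var x)
  | lam : ∀ {x y t}, x ≠ y → RFV x t → RFV x (lam y t)
  | appL : ∀ {x s t}, RFV x s → RFV x (app s t)
  | appR : ∀ {x s t}, RFV x t → RFV x (app s t)
  | bag : ∀ {x t ts}, t ∈ ts → RFV x t → RFV x (bag ts)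

/-- Linear substitution: `LSubst e x vs e'` holds iff `e'` is one of the terms
obtained from `e` by substituting the values `vs` bijectively for the free
occurrences of `x` in `e` (no such `e'` exists if the count mismatches). -/
inductive LSubst : RTm → ℕ → List RTm → RTm → Prop
  | varEq : ∀ x v, LSubst (var x) x [v] v
  | varNe : ∀ {x y}, y ≠ x → LSubst (var y) x [] (var y)
  | lamEq : ∀ x t, LSubst (lam x t) x [] (lam x t)
  | lamNe : ∀ {x y t vs t'}, y ≠ x → LSubst t x vs t' →
      LSubst (lam y t) x vs (lam y t')
  | app : ∀ {s t x us ws vs s' t'}, LSubst s x us s' → LSubst t x ws t' →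
      vs.Perm (us ++ ws) → LSubst (app s t) x vs (app s' t')
  | bagNil : ∀ x, LSubst (bag []) x [] (bag [])
  | bagCons : ∀ {v ts x us ws vs v' ts'}, LSubst v x us v' →
      LSubst (bag ts) x ws (bag ts') → vs.Perm (us ++ ws) →
      LSubst (bag (v :: ts)) x vs (bag (v' :: ts'))

/-- One step of resource reduction at the level of terms, producing a
(finite) set of resource terms: rules β_r, 0, σ₁, σ₃, contextually closed. -/
inductive RStep : RTm → Set RTm → Prop
  | beta : ∀ {x t vs}, (∀ v ∈ vs, IsRVal v) →
      RStep (app (bag [lam x t]) (bag vs)) {t' | LSubst t x vs t'}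
  | zero : ∀ {vs t}, (∀ v ∈ vs, IsRVal v) → vs.length ≠ 1 →
      RStep (app (bag vs) t) ∅
  | sigma1 : ∀ {x t s₁ s₂}, ¬ RFV x s₁ →
      RStep (app (app (bag [lam x t]) s₁) s₂) {app (bag [lam x (app t s₂)]) s₁}
  | sigma3 : ∀ {v x t s}, IsRVal v → ¬ RFV x v →
      RStep (app (bag [v]) (app (bag [lam x t]) s))
        {app (bag [lam x (app (bag [v]) t)]) s}
  | appL : ∀ {s S t}, RStep s S → RStep (app s t) {u | ∃ s' ∈ S, u = app s' t}
  | appR : ∀ {s t T}, RStep t T → RStep (app s t) {u | ∃ t' ∈ T, u = app s t'}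
  | lam : ∀ {x t T}, RStep t T → RStep (lam x t) {u | ∃ t' ∈ T, u = lam x t'}
  | bagHead : ∀ {v V ts}, RStep v V →
      RStep (bag (v :: ts)) {u | ∃ v' ∈ V, u = bag (v' :: ts)}
  | bagTail : ∀ {v ts T}, RStep (bag ts) T →
      RStep (bag (v :: ts)) {u | ∃ ts', bag ts' ∈ T ∧ u = bag (v :: ts')}

/-- The resource reduction →_r lifted to sets of resource terms:
`{e} ∪ E₂ →_r E₁ ∪ E₂` whenever `e →_r E₁` and `e ∉ E₂`. -/
inductive RSetStep : Set RTm → Set RTm → Prop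
  | mk : ∀ {e E₁ E₂}, RStep e E₁ → e ∉ E₂ → RSetStep (insert e E₂) (E₁ ∪ E₂)

/-- A set of resource terms is →_r-normal when no set-level step applies. -/
def RSetNormal (S : Set RTm) : Prop := ∀ S', ¬ RSetStep S S'

/-- `NF(E) = ⋃_{e ∈ E} nf_r(e)` : the set of resource terms occurring in the
(unique, by confluence and strong normalization) →_r-normal form of some
element of `E`. -/
def NF (E : Set RTm) : Set RTm :=
  {t | ∃ e ∈ E, ∃ S, Relation.ReflTransGen RSetStep {e} S ∧ RSetNormal S ∧ t ∈ S}

/-- `HasBRS t` : `t` contains a β_r-, σ₁- or σ₃-redex (0-redexes not counted). -/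
inductive HasBRS : RTm → Prop
  | beta : ∀ {x t vs}, (∀ v ∈ vs, IsRVal v) →
      HasBRS (app (bag [lam x t]) (bag vs))
  | sigma1 : ∀ {x t s₁ s₂}, ¬ RFV x s₁ → HasBRS (app (app (bag [lam x t]) s₁) s₂)
  | sigma3 : ∀ {v x t s}, IsRVal v → ¬ RFV x v →
      HasBRS (app (bag [v]) (app (bag [lam x t]) s))
  | appL : ∀ {s t}, HasBRS s → HasBRS (app s t)
  | appR : ∀ {s t}, HasBRS t → HasBRS (app s t)
  | lam : ∀ {x t}, HasBRS t → HasBRS (lam x t)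
  | bag : ∀ {t ts}, t ∈ ts → HasBRS t → HasBRS (bag ts)

mutual
  /-- The height of a resource term. -/
  def height : RTm → ℕ
    | var _ => 0
    | lam _ t => height t + 1
    | app s t => max (height s) (height t) + 1
    | bag ts => heightList ts + 1
  def heightList : List RTm → ℕ
    | [] => 0
    | t :: ts => max (height t) (heightList ts)
end

/-- The height of a set of resource terms (possibly infinite). -/
noncomputable def hSet (E : Set RTm) : ℕ∞ := ⨆ t ∈ E, (height t : ℕ∞)

/-- The coherence relation ¨ on resource terms. -/
inductive Coh : RTm → RTm → Prop
  | var : ∀ x, Coh (var x) (var x)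
  | lam : ∀ {x s t}, Coh s t → Coh (lam x s) (lam x t)
  | bag : ∀ {us vs}, (∀ a ∈ us ++ vs, ∀ b ∈ us ++ vs, Coh a b) →
      Coh (bag us) (bag vs)
  | app : ∀ {s₁ s₂ t₁ t₂}, Coh s₁ s₂ → Coh t₁ t₂ → Coh (app s₁ t₁) (app s₂ t₂)

/-- A clique: a set of pairwise coherent resource terms. -/
def Clique (E : Set RTm) : Prop := ∀ s ∈ E, ∀ t ∈ E, Coh s t

/-- A maximal clique: no resource term can be added keeping it a clique. -/
def MaxClique (E : Set RTm) : Prop :=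
  Clique E ∧ ∀ e : RTm, Clique (insert e E) → e ∈ E

end RTm
/-- The Taylor expansion: `InT M t` iff the simple term `t` belongs to 𝒯(M). -/
inductive InT : Tm → RTm → Prop
  | var : ∀ x n, InT (.var x) (.bag (List.replicate n (.var x)))
  | lam : ∀ {x N} (ts : List RTm), (∀ t ∈ ts, InT N t) →
      InT (.lam x N) (.bag (ts.map (RTm.lam x)))
  | app : ∀ {P Q s t}, InT P s → InT Q t → InT (.app P Q) (.app s t)

/-- The Taylor expansion 𝒯(M) of a λ-term, as a set of resource terms. -/
def Taylor (M : Tm) : Set RTm := {t | InT M t}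

/-- The normalized Taylor expansion of an approximant: `InTn A t` iff
`t ∈ 𝒯ⁿᶠ(A)`, following the grammar of approximants. -/
inductive InTn : Tm → RTm → Prop
  | var : ∀ x n, InTn (.var x) (.bag (List.replicate n (.var x)))
  | bot : InTn .bot (.bag [])
  | lam : ∀ {x A} (ts : List RTm), (∀ t ∈ ts, InTn A t) →
      InTn (.lam x A) (.bag (ts.map (RTm.lam x)))
  | spineHead : ∀ {x B t}, InTn B t →
      InTn (.app (.var x) B) (.app (.bag [.var x]) t)
  | spineApp : ∀ {S A s t}, Tm.IsBSpine S → InTn S s → InTn A t →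
      InTn (.app S A) (.app s t)
  | redex : ∀ {x A Q s t}, InTn A s → Tm.IsBSpine Q → InTn Q t →
      InTn (.app (.lam x A) Q) (.app (.bag [.lam x s]) t)

/-- The normalized Taylor expansion 𝒯ⁿᶠ(A) of an approximant. -/
def TaylorN (A : Tm) : Set RTm := {t | InTn A t}


/-! ### Auxiliary lemmas -/

/-- Lemma 1: if `A ⊑ M` with `M` a pure λ-term, then `𝒯ⁿᶠ(A) ⊆ 𝒯(M)`. -/
theorem inT_of_inTn : ∀ {A t}, InTn A t → ∀ {M : Tm}, M.NoBot → Tm.LE A M → InT M t := by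
  intro A t h
  induction h with
  | var x n =>
    intro M hM hle; cases hle; exact InT.var x n
  | bot =>
    intro M hM hle
    cases hle with
    | refl => exact hM.elim
    | botVar x => exact InT.var x 0
    | botLam x t => exact InT.lam [] (by simp)
  | lam ts hts ih =>
    intro M hM hle
    cases hle with
    | refl => exact InT.lam ts fun t ht => ih t ht hM (Tm.LE.refl _)
    | lam h' => exact InT.lam ts fun t ht => ih t ht hM h'
  | spineHead hB ih =>
    intro M hM hle
    cases hle with
    | refl => exact InT.app (InT.var _ 1) (ih hM.2 (Tm.LE.refl _))
    | app h1 h2 =>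
      cases h1
      exact InT.app (InT.var _ 1) (ih hM.2 h2)
  | spineApp hS hs ht ihs iht =>
    intro M hM hle
    cases hle with
    | refl => exact InT.app (ihs hM.1 (Tm.LE.refl _)) (iht hM.2 (Tm.LE.refl _))
    | app h1 h2 => exact InT.app (ihs hM.1 h1) (iht hM.2 h2)
  | redex hs hQ ht ihs iht =>
    rename_i x A' Q s' t'
    intro M hM hle
    cases hle with
    | refl =>
      exact InT.app (InT.lam [s'] fun u hu => by
          rw [List.eq_of_mem_singleton hu]; exact ihs hM.1 (Tm.LE.refl _))
        (iht hM.2 (Tm.LE.refl _))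
    | app h1 h2 =>
      cases h1 with
      | refl =>
        exact InT.app (InT.lam [s'] fun u hu => by
            rw [List.eq_of_mem_singleton hu]; exact ihs hM.1 (Tm.LE.refl _))
          (iht hM.2 h2)
      | lam h' =>
        exact InT.app (InT.lam [s'] fun u hu => by
            rw [List.eq_of_mem_singleton hu]; exact ihs hM.1 h')
          (iht hM.2 h2)

/-- `t` is normal for resource reduction. -/
def RNormal (t : RTm) : Prop := ∀ T, ¬ RTm.RStep t T

theorem rnormal_var (x : ℕ) : RNormal (.var x) := by
  intro T h; cases h

theorem rnormal_lam {x t} (h : RNormal t) : RNormal (RTm.lam x t) := by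
  intro T hs; cases hs with
  | lam h' => exact h _ h'

theorem rnormal_bag : ∀ {l : List RTm}, (∀ v ∈ l, RNormal v) → RNormal (.bag l) := by
  intro l
  induction l with
  | nil => intro _ T h; cases h
  | cons v ts ih =>
    intro H T h
    cases h with
    | bagHead h' => exact H v List.mem_cons_self _ h'
    | bagTail h' => exact ih (fun u hu => H u (List.mem_cons_of_mem _ hu)) _ h'

/-- Shape of elements of `𝒯ⁿᶠ(S)` when `S` is a B-spine: an application
headed by a singleton bag of a variable. -/
inductive SpineShape : RTm → Prop
  | head : ∀ x t, SpineShape (.app (.bag [.var x]) t)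
  | app : ∀ {s} (t), SpineShape s → SpineShape (.app s t)

theorem spineShape_of_inTn : ∀ {S s}, InTn S s → Tm.IsBSpine S → SpineShape s := by
  intro S s h
  induction h with
  | var x n => intro hS; cases hS
  | bot => intro hS; cases hS
  | lam ts hts ih => intro hS; cases hS
  | spineHead hB ih => intro _; exact SpineShape.head _ _
  | spineApp hS hs ht ihs iht => intro _; exact SpineShape.app _ (ihs hS)
  | redex hs hQ ht ihs iht =>
    intro hS
    cases hS with
    | app h' _ => cases h'

/-- Shape of elements of `𝒯ⁿᶠ(B)` when `B` is a B-term. -/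
theorem bshape_of_inTn : ∀ {B u}, InTn B u → Tm.IsB B →
    (∃ vs, u = RTm.bag vs) ∨ SpineShape u := by
  intro B u h hB
  cases h with
  | var x n => exact Or.inl ⟨_, rfl⟩
  | bot => exact Or.inl ⟨_, rfl⟩
  | lam ts hts => exact Or.inl ⟨_, rfl⟩
  | spineHead hB' => exact Or.inr (SpineShape.head _ _)
  | spineApp hS hs ht => exact Or.inr (SpineShape.app _ (spineShape_of_inTn hs hS))
  | redex hs hQ ht =>
    cases hB with
    | spine hsp =>
      cases hsp with
      | app h' _ => cases h'

/-- Lemma 2: elements of `𝒯ⁿᶠ(A)` are resource-normal when `A` is an approximant. -/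
theorem rnormal_of_inTn : ∀ {A t}, InTn A t → Tm.IsA A → RNormal t := by
  intro A t h
  induction h with
  | var x n =>
    intro _
    exact rnormal_bag fun v hv => by
      rw [List.eq_of_mem_replicate hv]; exact rnormal_var x
  | bot => intro _; exact rnormal_bag (by simp)
  | lam ts hts ih =>
    rename_i x A'
    intro hA
    have hA' : Tm.IsA A' := by
      cases hA with
      | ofB hb => cases hb with
        | lam h' => exact h'
        | spine hs => cases hs
      | ofC hc => cases hc
    exact rnormal_bag fun v hv => by
      obtain ⟨u, hu, rfl⟩ := List.mem_map.mp hv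
      exact rnormal_lam (ih u hu hA')
  | spineHead hB ih =>
    rename_i x B' t'
    intro hA
    have hB' : Tm.IsB B' := by
      cases hA with
      | ofB hb => cases hb with
        | spine hs => cases hs with
          | head h' => exact h'
          | app h' _ => cases h'
      | ofC hc => cases hc
    have hu := ih (Tm.IsA.ofB hB')
    intro T hstep
    cases hstep with
    | zero hvals hlen => simp at hlen
    | sigma3 hv hfv =>
      rcases bshape_of_inTn hB hB' with ⟨vs, h'⟩ | hsp
      · cases h'
      · cases hsp with
        | app t' hsp' => cases hsp'
    | appL h' =>
      exact rnormal_bag (fun v hv => by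
        rw [List.eq_of_mem_singleton hv]; exact rnormal_var _) _ h'
    | appR h' => exact hu _ h'
  | spineApp hS hs ht ihs iht =>
    rename_i S A' s' t'
    intro hA
    have hAa : Tm.IsA A' := by
      cases hA with
      | ofB hb => cases hb with
        | spine hsp => cases hsp with
          | head h' => exact Tm.IsA.ofB h'
          | app _ h' => exact h'
      | ofC hc => cases hc; cases hS
    have hspine := spineShape_of_inTn hs hS
    have hns := ihs (Tm.IsA.ofB (Tm.IsB.spine hS))
    have hnt := iht hAa
    intro T hstep
    cases hstep with
    | beta hvals => cases hspine
    | zero hvals hlen => cases hspine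
    | sigma1 hfv =>
      cases hspine with
      | app t'' hsp' => cases hsp'
    | sigma3 hv hfv => cases hspine
    | appL h' => exact hns _ h'
    | appR h' => exact hnt _ h'
  | redex hs hQ ht ihs iht =>
    rename_i x A' Q s' t'
    intro hA
    have hAa : Tm.IsA A' := by
      cases hA with
      | ofB hb => cases hb with
        | spine hsp => cases hsp with
          | app h' _ => cases h'
      | ofC hc => cases hc with
        | mk h1 h2 => exact h1
    have hspine := spineShape_of_inTn ht hQ
    have hnt := iht (Tm.IsA.ofB (Tm.IsB.spine hQ))
    have hns := ihs hAa
    intro T hstep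
    cases hstep with
    | beta hvals => cases hspine
    | zero hvals hlen => simp at hlen
    | sigma3 hv hfv =>
      cases hspine with
      | app t'' hsp' => cases hsp'
    | appL h' =>
      exact rnormal_bag (fun v hv => by
        rw [List.eq_of_mem_singleton hv]; exact rnormal_lam hns) _ h'
    | appR h' => exact hnt _ h'

/-- if `A` is an approximant with `A ⊑ M` for a λ-term `M`,
then `𝒯ⁿᶠ(A) ⊆ NF(𝒯(M))`. -/
theorem taylorN_subset_nf (A M : Tm) (hA : Tm.IsA A) (hM : M.NoBot)
    (h : Tm.LE A M) : TaylorN A ⊆ RTm.NF (Taylor M) := by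
  intro t ht
  have hn : RNormal t := rnormal_of_inTn ht hA
  refine ⟨t, inT_of_inTn ht hM h, {t}, Relation.ReflTransGen.refl, ?_, rfl⟩
  have key : ∀ {S S' : Set RTm}, RTm.RSetStep S S' → S = {t} → False := by
    intro S S' hstep
    cases hstep with
    | mk hr hnot =>
      rename_i e E₁ E₂
      intro heq
      have he : e ∈ ({t} : Set RTm) := heq ▸ Set.mem_insert e E₂
      rw [Set.mem_singleton_iff] at he
      subst he
      exact hn _ hr
  intro S' hstep
  exact key hstep rfl
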